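/- If holomorphic functions E2, E4, E6 on a domain satisfy the Ramanujan identities E2' = (E2^2 - E4)/12, E4' = (E2·E4 - E6)/3, and E6' = (E2·E6 - E4^2)/2 (with respect to a fixed derivation), then E2 satisfies the Chazy equation 2·E2''' - 2·E2·E2'' + 3·(E2')^2 = 0. -/
import Mathlib


/-- **Ramanujan identities imply the Chazy equation.**
If `E2, E4, E6` in a commutative `ℚ`-algebra satisfy the Ramanujan identities
with respect to a derivation `D`, then `E2` satisfies the Chazy equation
`2·E2''' − 2·E2·E2'' + 3·(E2')² = 0`. -/
theorem ramanujan_implies_chazy {R : Type*} [CommRing R] [Algebra ℚ R]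
    (D : Derivation ℚ R R) (E2 E4 E6 : R)
    (h2 : D E2 = (1/12 : ℚ) • (E2 ^ 2 - E4))
    (h4 : D E4 = (1/3 : ℚ) • (E2 * E4 - E6))
    (h6 : D E6 = (1/2 : ℚ) • (E2 * E6 - E4 ^ 2)) :
    2 * D (D (D E2)) - 2 * E2 * D (D E2) + 3 * (D E2) ^ 2 = 0 := by
  have cast : ∀ (n : ℕ) (x : R), ((n:ℚ)) • x = (n : R) * x := by
    intro n x
    rw [Algebra.smul_def, map_natCast]
  -- denominator-free versions of the Ramanujan identities
  have e2 : (12 : R) * D E2 = E2 ^ 2 - E4 := by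
    rw [h2, show ((12:R)) = ((12:ℕ):R) by norm_num, ← cast, smul_smul]
    norm_num
  have e4 : (3 : R) * D E4 = E2 * E4 - E6 := by
    rw [h4, show ((3:R)) = ((3:ℕ):R) by norm_num, ← cast, smul_smul]
    norm_num
  have e6 : (2 : R) * D E6 = E2 * E6 - E4 ^ 2 := by
    rw [h6, show ((2:R)) = ((2:ℕ):R) by norm_num, ← cast, smul_smul]
    norm_num
  -- differentiate them
  have d2 : (12 : R) * D (D E2) = 2 * E2 * D E2 - D E4 := by
    have h := congrArg D e2
    rw [Derivation.leibniz, map_sub, Derivation.leibniz_pow] at h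
    rw [show D (12:R) = 0 by exact_mod_cast D.map_natCast 12] at h
    simp only [smul_eq_mul, nsmul_eq_mul, pow_one] at h
    linear_combination h
  have d4 : (3 : R) * D (D E4) = D E2 * E4 + E2 * D E4 - D E6 := by
    have h := congrArg D e4
    rw [Derivation.leibniz, map_sub, Derivation.leibniz] at h
    rw [show D (3:R) = 0 by exact_mod_cast D.map_natCast 3] at h
    simp only [smul_eq_mul] at h
    linear_combination h
  have d3 : (12 : R) * D (D (D E2)) = 2 * D E2 * D E2 + 2 * E2 * D (D E2) - D (D E4) := by
    have h := congrArg D d2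
    rw [Derivation.leibniz, map_sub, Derivation.leibniz, Derivation.leibniz] at h
    rw [show D (12:R) = 0 by exact_mod_cast D.map_natCast 12,
        show D (2:R) = 0 by exact_mod_cast D.map_natCast 2] at h
    simp only [smul_eq_mul] at h
    linear_combination h
  -- the Chazy combination, cleared of denominators
  have key : (72 : R) * (2 * D (D (D E2)) - 2 * E2 * D (D E2) + 3 * (D E2) ^ 2) = 0 := by
    linear_combination 12 * d3 + (-10 * E2) * d2 + (-4) * d4
      + (20 * D E2 - 2 * E4) * e2 + 2 * E2 * e4 + 2 * e6
  have h72 : (72 : R) * (2 * D (D (D E2)) - 2 * E2 * D (D E2) + 3 * (D E2) ^ 2)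
      = ((72:ℕ):ℚ) • (2 * D (D (D E2)) - 2 * E2 * D (D E2) + 3 * (D E2) ^ 2) := by
    rw [cast]; norm_num
  have := h72 ▸ key
  calc 2 * D (D (D E2)) - 2 * E2 * D (D E2) + 3 * (D E2) ^ 2
      = (1/72 : ℚ) • (((72:ℕ):ℚ) • (2 * D (D (D E2)) - 2 * E2 * D (D E2) + 3 * (D E2) ^ 2)) := by
        rw [smul_smul]; norm_num
    _ = 0 := by rw [this, smul_zero]
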